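/- Quantitative tail bound: if ω is a Borel probability measure on X satisfying the superstability estimate with constants C_ω, λ₀, then there exist constants C > 0 and N₀ > 0 (depending only on d, C_ω, λ₀) such that for every N ≥ N₀, ω({x : Q(x) > N}) ≤ C e^{−N λ₀/4}. -/
import Mathlib


open MeasureTheory Real Filter
open scoped ENNReal

noncomputable section

/-- A site of the `d`-dimensional integer lattice. -/
abbrev Site (d : ℕ) := Fin d → ℤ

/-- A configuration: at each site, a position `q` and a momentum `p`. -/
abbrev Conf (d : ℕ) := Site d → ℝ × ℝ

/-- ℓ¹ norm on the lattice. -/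
def lnorm {d : ℕ} (ν : Site d) : ℤ := ∑ ℓ, |ν ℓ|

/-- ℓ¹ distance on the lattice. -/
def ldist {d : ℕ} (i j : Site d) : ℤ := ∑ ℓ, |i ℓ - j ℓ|

/-- The cube `Λ_{ν,k}` of center `ν` and side `2k+1`. -/
def cube {d : ℕ} (ν : Site d) (k : ℕ) : Finset (Site d) :=
  Fintype.piFinset fun ℓ => Finset.Icc (ν ℓ - (k : ℤ)) (ν ℓ + (k : ℤ))

/-- The local energy `W_{ν,k}(x)`. -/
noncomputable def Wen {d : ℕ} (U : Polynomial ℝ) (K : ℝ) (ν : Site d) (k : ℕ)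
    (x : Conf d) : ℝ :=
  (∑ i ∈ cube ν k, ((x i).2 ^ 2 / 2 + U.eval (x i).1 + 1)) +
    K / 4 * ∑ i ∈ cube ν k, ∑ j ∈ cube ν k,
      (if ldist i j = 1 then ((x i).1 - (x j).1) ^ 2 else 0)

/-- The functional `Q(x) = sup_ν sup_{k > log^{1/d}(e+|ν|)} W_{ν,k}(x)/(2k+1)^d`,
with values in `[0,∞]`. -/
noncomputable def Qen {d : ℕ} (U : Polynomial ℝ) (K : ℝ) (x : Conf d) : ℝ≥0∞ :=
  ⨆ ν : Site d, ⨆ k : ℕ,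
    ⨆ _ : Real.log (Real.exp 1 + (lnorm ν : ℝ)) ^ ((1 : ℝ) / (d : ℝ)) < (k : ℝ),
      ENNReal.ofReal (Wen U K ν k x / (2 * (k : ℝ) + 1) ^ d)

/-- The good set of configurations `X₀ = {x : Q(x) < ∞}`. -/
def X0 (d : ℕ) (U : Polynomial ℝ) (K : ℝ) : Set (Conf d) := {x | Qen U K x < ⊤}

/-- Superstability estimate for a measure `ω` with constants `Cw`, `lam0`:
`∫ e^{λ W_{ν,k}} dω ≤ e^{Cw (2k+1)^d}` for all `ν`, `k` and `0 < λ ≤ lam0`. -/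
def Superstable {d : ℕ} (U : Polynomial ℝ) (K : ℝ) (ω : Measure (Conf d))
    (Cw lam0 : ℝ) : Prop :=
  ∀ (ν : Site d) (k : ℕ) (lam : ℝ), 0 < lam → lam ≤ lam0 →
    ∫⁻ x, ENNReal.ofReal (Real.exp (lam * Wen U K ν k x)) ∂ω
      ≤ ENNReal.ofReal (Real.exp (Cw * (2 * (k : ℝ) + 1) ^ d))

lemma measurable_Wen {d : ℕ} (U : Polynomial ℝ) (K : ℝ) (ν : Site d) (k : ℕ) :
    Measurable (Wen U K ν k) := by
  unfold Wen
  apply Measurable.add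
  · apply Finset.measurable_sum
    intro i _
    exact ((((measurable_pi_apply i).snd.pow_const 2).div_const 2).add
      ((U.continuous.measurable).comp (measurable_pi_apply i).fst)).add measurable_const
  · apply Measurable.const_mul
    apply Finset.measurable_sum
    intro i _
    apply Finset.measurable_sum
    intro j _
    by_cases h : ldist i j = 1 <;> simp only [h, if_true, if_false]
    · exact ((measurable_pi_apply i).fst.sub (measurable_pi_apply j).fst).pow_const 2
    · exact measurable_const

lemma tsum_pi_prod (m : ℕ) (F : ℤ → ℝ≥0∞) :
    ∑' ν : Fin m → ℤ, ∏ ℓ, F (ν ℓ) = (∑' n : ℤ, F n) ^ m := by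
  induction m with
  | zero =>
    have h : ∀ ν : Fin 0 → ℤ, (∏ ℓ, F (ν ℓ)) = 1 := fun ν => Finset.prod_of_isEmpty _
    rw [tsum_congr h, tsum_eq_single (fun i => i.elim0)
      (fun b hb => absurd (funext fun i => i.elim0) hb)]
    simp
  | succ m ih =>
    rw [← (Fin.consEquiv (fun _ : Fin (m+1) => ℤ)).tsum_eq]
    have h : ∀ p : ℤ × (Fin m → ℤ),
        (∏ ℓ, F ((Fin.consEquiv (fun _ : Fin (m+1) => ℤ)) (p.1, p.2) ℓ))
          = F p.1 * ∏ ℓ : Fin m, F (p.2 ℓ) := by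
      intro p
      rw [Fin.prod_univ_succ]
      simp [Fin.consEquiv]
    calc ∑' p : ℤ × (Fin m → ℤ), ∏ ℓ, F ((Fin.consEquiv fun _ => ℤ) p ℓ)
        = ∑' p : ℤ × (Fin m → ℤ), F p.1 * ∏ ℓ : Fin m, F (p.2 ℓ) :=
          tsum_congr fun p => h p
      _ = ∑' (a : ℤ), ∑' (b : Fin m → ℤ), F a * ∏ ℓ, F (b ℓ) :=
          ENNReal.tsum_prod (f := fun (a : ℤ) (b : Fin m → ℤ) => F a * ∏ ℓ : Fin m, F (b ℓ))
      _ = ∑' (a : ℤ), F a * ∑' (b : Fin m → ℤ), ∏ ℓ, F (b ℓ) :=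
          tsum_congr fun a => ENNReal.tsum_mul_left
      _ = (∑' n : ℤ, F n) ^ (m+1) := by rw [ENNReal.tsum_mul_right, ih, pow_succ, mul_comm]

set_option maxHeartbeats 1000000 in
/-- Quantitative tail bound: `ω(Q > N) ≤ C e^{-N λ₀/4}` for `N ≥ N₀`, with constants
`C`, `N₀` depending only on `d`, `C_ω`, `λ₀`. -/
theorem statement4 {d : ℕ} (hd : 0 < d) (Cw lam0 : ℝ) (hCw : 0 < Cw) (hlam0 : 0 < lam0) :
    ∃ C > (0:ℝ), ∃ N₀ > (0:ℝ),
      ∀ (U : Polynomial ℝ), U.degree = 4 → (∀ y : ℝ, 0 ≤ U.eval y) →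
        0 < U.leadingCoeff → ∀ K : ℝ, 0 < K →
      ∀ ω : Measure (Conf d), IsProbabilityMeasure ω → Superstable U K ω Cw lam0 →
      ∀ N : ℝ, N₀ ≤ N →
        ω {x | ENNReal.ofReal N < Qen U K x} ≤
          ENNReal.ofReal (C * Real.exp (-(N * lam0) / 4)) := by
  classical
  -- the convergent series over ℤ
  set g : ℤ → ℝ := fun n => ((1:ℝ) + |(n:ℝ)|)⁻¹ ^ 2 with hg_def
  have hg_nonneg : ∀ n, 0 ≤ g n := fun n => by positivity
  have hnat : Summable (fun n : ℕ => ((1:ℝ) + (n:ℝ))⁻¹ ^ 2) := by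
    have h1 : Summable (fun n : ℕ => 1 / ((n:ℝ)) ^ 2) :=
      (summable_one_div_nat_pow (p := 2)).mpr one_lt_two
    have h2 := (summable_nat_add_iff (f := fun n : ℕ => 1 / ((n:ℝ)) ^ 2) 1).mpr h1
    apply h2.congr
    intro n
    push_cast
    rw [one_div, inv_pow]
    ring_nf
  have hg_summable : Summable g := by
    apply Summable.of_nat_of_neg
    · apply hnat.congr; intro n; simp [hg_def]
    · apply hnat.congr; intro n; simp [hg_def]
  set S1 : ℝ := ∑' n : ℤ, g n with hS1_def
  have hS1_ge : 1 ≤ S1 := by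
    have h0 : g 0 = 1 := by simp [hg_def]
    have := Summable.le_tsum hg_summable 0 (fun j _ => hg_nonneg j)
    rw [h0] at this
    exact this
  have hS1_pos : (0:ℝ) < S1 := lt_of_lt_of_le one_pos hS1_ge
  refine ⟨S1 ^ d, by positivity, 4 * (Cw + 2*(d:ℝ) + 1) / lam0, by positivity, ?_⟩
  intro U hdeg hUnn hUlead K hK ω hprob hss N hN
  have hN4 : Cw + 2*(d:ℝ) + 1 ≤ N * lam0 / 4 := by
    have := (div_le_iff₀ hlam0).mp hN
    nlinarith
  have hNpos : (0:ℝ) < N := by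
    have h0 : (0:ℝ) < 4 * (Cw + 2*(d:ℝ) + 1) / lam0 := by positivity
    linarith
  -- notation
  set V : ℕ → ℝ := fun k => (2*(k:ℝ)+1)^d with hV_def
  set L : Site d → ℝ := fun ν => Real.log (Real.exp 1 + (lnorm ν : ℝ)) with hL_def
  have hVpos : ∀ k, 0 < V k := fun k => by positivity
  have hlnn : ∀ ν : Site d, (0:ℝ) ≤ ((lnorm ν : ℤ) : ℝ) := by
    intro ν
    have : (0:ℤ) ≤ lnorm ν := Finset.sum_nonneg fun i _ => abs_nonneg _
    exact_mod_cast this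
  have hL1 : ∀ ν, 1 ≤ L ν := by
    intro ν
    rw [hL_def]
    rw [Real.le_log_iff_exp_le (by linarith [hlnn ν, Real.exp_pos 1])]
    exact le_add_of_nonneg_right (hlnn ν)
  -- bad sets
  set T : Site d → ℕ → Set (Conf d) := fun ν k =>
    {x | L ν ^ ((1:ℝ)/(d:ℝ)) < (k:ℝ)} ∩ {x | N * V k < Wen U K ν k x} with hT_def
  -- covering
  have hcover : {x | ENNReal.ofReal N < Qen U K x} ⊆ ⋃ (ν : Site d), ⋃ (k : ℕ), T ν k := by
    intro x hx
    simp only [Set.mem_setOf_eq, Qen, lt_iSup_iff] at hx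
    obtain ⟨ν, k, hcond, hlt⟩ := hx
    have h1 : N < Wen U K ν k x / (2*(k:ℝ)+1)^d :=
      (ENNReal.ofReal_lt_ofReal_iff_of_nonneg hNpos.le).mp hlt
    have h2 : N * V k < Wen U K ν k x := by
      rw [hV_def]
      exact (lt_div_iff₀ (by positivity)).mp h1
    exact Set.mem_iUnion.2 ⟨ν, Set.mem_iUnion.2 ⟨k, ⟨hcond, h2⟩⟩⟩
  -- per-term bound
  have key : ∀ (ν : Site d) (k : ℕ),
      ω (T ν k) ≤ ENNReal.ofReal (Real.exp (-(N * lam0) / 4) * (∏ ℓ, g (ν ℓ)) *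
        ((2:ℝ)⁻¹) ^ (k+1)) := by
    intro ν k
    by_cases hc : L ν ^ ((1:ℝ)/(d:ℝ)) < (k:ℝ)
    swap
    · have hempty : T ν k = ∅ := by
        rw [hT_def]
        ext x
        simp only [Set.mem_inter_iff, Set.mem_setOf_eq, Set.mem_empty_iff_false, iff_false,
          not_and]
        exact fun h => absurd h hc
      rw [hempty]
      simp
    -- facts
    have hL1ν := hL1 ν
    have hLnn : (0:ℝ) ≤ L ν := by linarith
    have hd' : (d:ℝ) ≠ 0 := Nat.cast_ne_zero.mpr hd.ne'
    have hrp1 : (1:ℝ) ≤ L ν ^ ((1:ℝ)/(d:ℝ)) := Real.one_le_rpow hL1ν (by positivity)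
    have hk1 : (1:ℝ) ≤ (k:ℝ) := le_of_lt (lt_of_le_of_lt hrp1 hc)
    have hLk : L ν ≤ (k:ℝ)^d := by
      have h1 : (L ν ^ ((1:ℝ)/(d:ℝ))) ^ d < (k:ℝ)^d :=
        pow_lt_pow_left₀ hc (Real.rpow_nonneg hLnn _) hd.ne'
      have h2 : (L ν ^ ((1:ℝ)/(d:ℝ))) ^ d = L ν := by
        rw [← Real.rpow_natCast (L ν ^ ((1:ℝ)/(d:ℝ))) d, ← Real.rpow_mul hLnn]
        rw [one_div, inv_mul_cancel₀ hd', Real.rpow_one]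
      linarith [h1, h2.ge, h2.le]
    have hV1 : 1 ≤ V k := one_le_pow₀ (by linarith)
    have hVk : (k:ℝ)^d ≤ V k := by
      rw [hV_def]
      exact pow_le_pow_left₀ (by linarith) (by linarith) d
    have hLV : L ν ≤ V k := le_trans hLk hVk
    have hVlin : (k:ℝ) + 1 ≤ V k := by
      rw [hV_def]
      calc (k:ℝ) + 1 ≤ 2*(k:ℝ)+1 := by linarith
        _ ≤ (2*(k:ℝ)+1)^d := le_self_pow₀ (by linarith) hd.ne'
    -- Chebyshev
    have hcheb := hss ν k lam0 hlam0 le_rfl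
    have hmeas : Measurable fun x => ENNReal.ofReal (Real.exp (lam0 * Wen U K ν k x)) :=
      ENNReal.measurable_ofReal.comp
        (Real.measurable_exp.comp ((measurable_Wen U K ν k).const_mul lam0))
    have h1 := mul_meas_ge_le_lintegral₀ (μ := ω) hmeas.aemeasurable
      (ENNReal.ofReal (Real.exp (lam0 * (N * V k))))
    have hsub : T ν k ⊆
        {x | ENNReal.ofReal (Real.exp (lam0 * (N * V k)))
          ≤ ENNReal.ofReal (Real.exp (lam0 * Wen U K ν k x))} := by
      rintro x ⟨-, hx⟩
      exact ENNReal.ofReal_le_ofReal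
        (Real.exp_le_exp.2 (mul_le_mul_of_nonneg_left (le_of_lt hx) hlam0.le))
    have h2 : ENNReal.ofReal (Real.exp (lam0 * (N * V k))) * ω (T ν k)
        ≤ ENNReal.ofReal (Real.exp (Cw * V k)) := by
      calc ENNReal.ofReal (Real.exp (lam0 * (N * V k))) * ω (T ν k)
          ≤ ENNReal.ofReal (Real.exp (lam0 * (N * V k)))
              * ω {x | ENNReal.ofReal (Real.exp (lam0 * (N * V k)))
                ≤ ENNReal.ofReal (Real.exp (lam0 * Wen U K ν k x))} :=
            mul_le_mul_right (measure_mono hsub) _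
        _ ≤ ∫⁻ x, ENNReal.ofReal (Real.exp (lam0 * Wen U K ν k x)) ∂ω := h1
        _ ≤ _ := hcheb
    have h3 : ω (T ν k) ≤ ENNReal.ofReal (Real.exp (Cw * V k - lam0 * (N * V k))) := by
      have hrw : ENNReal.ofReal (Real.exp (Cw * V k))
          = ENNReal.ofReal (Real.exp (lam0 * (N * V k)))
            * ENNReal.ofReal (Real.exp (Cw * V k - lam0 * (N * V k))) := by
        rw [← ENNReal.ofReal_mul (Real.exp_nonneg _), ← Real.exp_add]
        ring_nf
      rw [hrw] at h2
      exact (ENNReal.mul_le_mul_iff_right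
        (ENNReal.ofReal_pos.mpr (Real.exp_pos _)).ne' ENNReal.ofReal_ne_top).mp h2
    -- real estimate
    apply le_trans h3
    apply ENNReal.ofReal_le_ofReal
    have hexp1 : Cw * V k - lam0 * (N * V k)
        ≤ (-(N * lam0) / 4) + (-(2*(d:ℝ)) * L ν) + (-((k:ℝ)+1)) := by
      have q1 : (0:ℝ) ≤ (N * lam0 / 4 - Cw - 2*(d:ℝ) - 1) * V k :=
        mul_nonneg (by linarith) (by linarith [hVpos k])
      have q2 : (0:ℝ) ≤ (2*(d:ℝ)) * (V k - L ν) := mul_nonneg (by positivity) (by linarith)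
      have q3 : (0:ℝ) ≤ (N * lam0 / 4) * (V k - 1) :=
        mul_nonneg (by nlinarith) (by linarith)
      nlinarith [q1, q2, q3, hVlin]
    calc Real.exp (Cw * V k - lam0 * (N * V k))
        ≤ Real.exp ((-(N * lam0) / 4) + (-(2*(d:ℝ)) * L ν) + (-((k:ℝ)+1))) :=
          Real.exp_le_exp.2 hexp1
      _ = Real.exp (-(N * lam0) / 4) * Real.exp (-(2*(d:ℝ)) * L ν)
            * Real.exp (-((k:ℝ)+1)) := by rw [Real.exp_add, Real.exp_add]
      _ ≤ Real.exp (-(N * lam0) / 4) * (∏ ℓ, g (ν ℓ)) * ((2:ℝ)⁻¹) ^ (k+1) := by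
          have habs : ∀ ℓ : Fin d, |((ν ℓ : ℤ) : ℝ)| ≤ ((lnorm ν : ℤ) : ℝ) := by
            intro ℓ
            have h : |ν ℓ| ≤ lnorm ν :=
              Finset.single_le_sum (fun i _ => abs_nonneg (ν i)) (Finset.mem_univ ℓ)
            calc |((ν ℓ : ℤ) : ℝ)| = ((|ν ℓ| : ℤ) : ℝ) := by push_cast; ring
              _ ≤ _ := by exact_mod_cast h
          have he1 : (1:ℝ) ≤ Real.exp 1 := by linarith [Real.add_one_le_exp (1:ℝ)]
          set t : ℝ := ((lnorm ν : ℤ) : ℝ) with ht_def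
          have htnn : 0 ≤ t := hlnn ν
          have hP : ∀ ℓ : Fin d, (0:ℝ) < 1 + |((ν ℓ : ℤ) : ℝ)| := fun ℓ => by positivity
          have hprodP : (0:ℝ) < ∏ ℓ, (1 + |((ν ℓ : ℤ) : ℝ)|) :=
            Finset.prod_pos fun ℓ _ => hP ℓ
          have hprod_le : ∏ ℓ, (1 + |((ν ℓ : ℤ) : ℝ)|) ≤ (Real.exp 1 + t)^d := by
            calc ∏ ℓ, (1 + |((ν ℓ : ℤ) : ℝ)|)
                ≤ ∏ _ℓ : Fin d, (Real.exp 1 + t) :=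
                  Finset.prod_le_prod (fun ℓ _ => (hP ℓ).le)
                    (fun ℓ _ => by have := habs ℓ; linarith)
              _ = (Real.exp 1 + t)^d := by
                  rw [Finset.prod_const, Finset.card_univ, Fintype.card_fin]
          have h2d : Real.exp (-(2*(d:ℝ)) * L ν) ≤ ∏ ℓ, g (ν ℓ) := by
            have hLt : Real.exp (L ν) = Real.exp 1 + t := by
              rw [hL_def]
              exact Real.exp_log (by positivity)
            have e1 : Real.exp (-(2*(d:ℝ)) * L ν) = ((Real.exp 1 + t)⁻¹) ^ (2*d) := by
              have e0 : -(2*(d:ℝ)) * L ν = ((2*d : ℕ) : ℝ) * (-(L ν)) := by push_cast; ring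
              rw [e0, Real.exp_nat_mul, Real.exp_neg, hLt]
            have e2 : (∏ ℓ, g (ν ℓ)) = (∏ ℓ, (1 + |((ν ℓ : ℤ) : ℝ)|))⁻¹ ^ 2 := by
              simp only [hg_def]
              rw [Finset.prod_pow, ← Finset.prod_inv_distrib]
            rw [e1, e2, inv_pow, inv_pow]
            apply inv_anti₀ (by positivity)
            calc (∏ ℓ, (1 + |((ν ℓ : ℤ) : ℝ)|)) ^ 2 ≤ ((Real.exp 1 + t)^d) ^ 2 :=
                  pow_le_pow_left₀ hprodP.le hprod_le 2
              _ = (Real.exp 1 + t) ^ (2*d) := by rw [← pow_mul, mul_comm]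
          have hk2 : Real.exp (-((k:ℝ)+1)) ≤ ((2:ℝ)⁻¹) ^ (k+1) := by
            have e3 : Real.exp (-((k:ℝ)+1)) = (Real.exp (-1)) ^ (k+1) := by
              rw [← Real.exp_nat_mul]
              congr 1
              push_cast
              ring
            rw [e3]
            apply pow_le_pow_left₀ (Real.exp_nonneg _)
            rw [Real.exp_neg]
            have h2e : (2:ℝ) ≤ Real.exp 1 := by linarith [Real.add_one_le_exp (1:ℝ)]
            exact inv_anti₀ two_pos h2e
          have hAnn : (0:ℝ) ≤ Real.exp (-(N * lam0) / 4) := Real.exp_nonneg _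
          have hgnn : (0:ℝ) ≤ ∏ ℓ, g (ν ℓ) := Finset.prod_nonneg fun ℓ _ => hg_nonneg _
          exact mul_le_mul (mul_le_mul_of_nonneg_left h2d hAnn) hk2
            (Real.exp_nonneg _) (mul_nonneg hAnn hgnn)
  -- summation
  have hgeo : ∑' k : ℕ, ENNReal.ofReal (((2:ℝ)⁻¹) ^ (k+1)) = 1 := by
    have h1 : ∀ k : ℕ, ENNReal.ofReal (((2:ℝ)⁻¹) ^ (k+1)) = (2:ℝ≥0∞)⁻¹ ^ (k+1) := by
      intro k
      rw [ENNReal.ofReal_pow (by norm_num)]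
      congr 1
      rw [ENNReal.ofReal_inv_of_pos two_pos]
      norm_num
    rw [tsum_congr h1]
    have h2 : ∀ k : ℕ, (2:ℝ≥0∞)⁻¹ ^ (k+1) = 2⁻¹ * 2⁻¹ ^ k := fun k => by rw [pow_succ, mul_comm]
    rw [tsum_congr h2, ENNReal.tsum_mul_left, ENNReal.tsum_geometric,
      ENNReal.one_sub_inv_two, ENNReal.mul_inv_cancel (by norm_num) (by norm_num)]
  calc ω {x | ENNReal.ofReal N < Qen U K x}
      ≤ ω (⋃ (ν : Site d), ⋃ (k : ℕ), T ν k) := measure_mono hcover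
    _ ≤ ∑' ν : Site d, ω (⋃ (k : ℕ), T ν k) := measure_iUnion_le _
    _ ≤ ∑' ν : Site d, ∑' k : ℕ, ω (T ν k) :=
        ENNReal.tsum_le_tsum fun ν => measure_iUnion_le _
    _ ≤ ∑' ν : Site d, ∑' k : ℕ, ENNReal.ofReal (Real.exp (-(N * lam0) / 4) *
          (∏ ℓ, g (ν ℓ)) * ((2:ℝ)⁻¹) ^ (k+1)) :=
        ENNReal.tsum_le_tsum fun ν => ENNReal.tsum_le_tsum fun k => key ν k
    _ = ∑' ν : Site d, ENNReal.ofReal (Real.exp (-(N * lam0) / 4) * (∏ ℓ, g (ν ℓ))) := by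
        apply tsum_congr
        intro ν
        have hnn : (0:ℝ) ≤ Real.exp (-(N * lam0) / 4) * (∏ ℓ, g (ν ℓ)) :=
          mul_nonneg (Real.exp_nonneg _) (Finset.prod_nonneg fun ℓ _ => hg_nonneg _)
        calc ∑' k : ℕ, ENNReal.ofReal (Real.exp (-(N * lam0) / 4) *
                (∏ ℓ, g (ν ℓ)) * ((2:ℝ)⁻¹) ^ (k+1))
            = ∑' k : ℕ, ENNReal.ofReal (Real.exp (-(N * lam0) / 4) * (∏ ℓ, g (ν ℓ)))
                * ENNReal.ofReal (((2:ℝ)⁻¹) ^ (k+1)) := by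
              apply tsum_congr
              intro k
              rw [← ENNReal.ofReal_mul hnn]
          _ = _ := by rw [ENNReal.tsum_mul_left, hgeo, mul_one]
    _ = ENNReal.ofReal (S1 ^ d * Real.exp (-(N * lam0) / 4)) := by
        have h1 : ∀ ν : Site d, ENNReal.ofReal (Real.exp (-(N * lam0) / 4) * (∏ ℓ, g (ν ℓ)))
            = ENNReal.ofReal (Real.exp (-(N * lam0) / 4)) * ∏ ℓ, ENNReal.ofReal (g (ν ℓ)) := by
          intro ν
          rw [ENNReal.ofReal_mul (Real.exp_nonneg _),
            ENNReal.ofReal_prod_of_nonneg (fun ℓ _ => hg_nonneg _)]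
        rw [tsum_congr h1, ENNReal.tsum_mul_left,
          tsum_pi_prod d (fun n => ENNReal.ofReal (g n)),
          ← ENNReal.ofReal_tsum_of_nonneg hg_nonneg hg_summable, ← hS1_def,
          ← ENNReal.ofReal_pow hS1_pos.le, ← ENNReal.ofReal_mul (Real.exp_nonneg _)]
        rw [mul_comm]
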